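/- arXiv:1901.05353 — 3 statements merged into one kernel-verified Lean document; each statement's English description precedes it below -/
import Mathlib

section
/- (Donsker–Varadhan / Catoni variational formula) Let (A, 𝒜) be a measurable space, ν a probability measure on A, and h : A → ℝ measurable with ∫ exp(h) dν < ∞. Then log ∫ exp(h) dν = sup over probability measures μ ≪ ν of ( ∫ h dμ − KL(μ, ν) ), with the convention ∞ − ∞ = −∞. -/
open MeasureTheory Real Filter Topology

section DVaux

variable {A : Type*} [MeasurableSpace A]

/-- Upper bound: Gibbs inequality via Jensen. -/
lemma dv_upper (ν : Measure A) [IsProbabilityMeasure ν]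
    (h : A → ℝ)
    (hexp : Integrable (fun a => Real.exp (h a)) ν)
    (μ : Measure A) [IsProbabilityMeasure μ] (hac : μ ≪ ν)
    (hinth : Integrable h μ) (hintl : Integrable (llr μ ν) μ) :
    (∫ a, h a ∂μ) - ∫ a, llr μ ν a ∂μ ≤ Real.log (∫ a, Real.exp (h a) ∂ν) := by
  have hZpos : 0 < ∫ a, Real.exp (h a) ∂ν := integral_exp_pos hexp
  set f : A → ℝ := fun x => h x - llr μ ν x with hf
  have hfi : Integrable f μ := hinth.sub hintl
  have heq : (fun x => Real.exp (f x))
      =ᵐ[μ] fun x => Real.exp (h x) * (ν.rnDeriv μ x).toReal := by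
    filter_upwards [exp_neg_llr hac] with x hx
    simp only [hf]
    rw [sub_eq_add_neg, Real.exp_add, hx]
  -- the measure ν' = μ.withDensity (ν.rnDeriv μ) is below ν
  set ν' : Measure A := μ.withDensity (ν.rnDeriv μ) with hν'
  have hle : ν' ≤ ν := Measure.withDensity_rnDeriv_le ν μ
  haveI : IsFiniteMeasure ν' := isFiniteMeasure_of_le ν hle
  have hexp' : Integrable (fun a => Real.exp (h a)) ν' := hexp.mono_measure hle
  have hprod : Integrable (fun x => Real.exp (h x) * (ν.rnDeriv μ x).toReal) μ :=
    (integrable_withDensity_iff (Measure.measurable_rnDeriv ν μ)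
      (Measure.rnDeriv_lt_top ν μ)).mp hexp'
  have hgi : Integrable (fun x => Real.exp (f x)) μ := hprod.congr heq.symm
  -- integral bound
  have hint_eq : ∫ x, Real.exp (f x) ∂μ = ∫ a, Real.exp (h a) ∂ν' := by
    rw [integral_congr_ae heq]
    rw [← integral_rnDeriv_smul (μ := ν') (ν := μ)
      (withDensity_absolutelyContinuous μ (ν.rnDeriv μ))
      (f := fun a => Real.exp (h a))]
    refine integral_congr_ae ?_
    filter_upwards [Measure.rnDeriv_withDensity μ (Measure.measurable_rnDeriv ν μ)] with x hx
    rw [hx, smul_eq_mul, mul_comm]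
  have hint_le : ∫ x, Real.exp (f x) ∂μ ≤ ∫ a, Real.exp (h a) ∂ν := by
    rw [hint_eq]
    exact integral_mono_measure hle (Filter.Eventually.of_forall fun x => (Real.exp_pos _).le) hexp
  -- Jensen
  have hjen : Real.exp (∫ x, f x ∂μ) ≤ ∫ x, Real.exp (f x) ∂μ :=
    convexOn_exp.map_integral_le continuous_exp.continuousOn isClosed_univ
      (Filter.Eventually.of_forall fun x => Set.mem_univ (f x)) hfi hgi
  have h2 : ∫ x, f x ∂μ ≤ Real.log (∫ a, Real.exp (h a) ∂ν) :=
    (Real.le_log_iff_exp_le hZpos).mpr (hjen.trans hint_le)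
  rwa [integral_sub hinth hintl] at h2

/-- Lower bound witnesses from tilting by the truncated function `min h c`. -/
lemma dv_witness (ν : Measure A) [IsProbabilityMeasure ν]
    (h : A → ℝ) (hmeas : Measurable h)
    (hexp : Integrable (fun a => Real.exp (h a)) ν) (c : ℝ) :
    ∃ r ∈ {r : ℝ | ∃ μ : Measure A, IsProbabilityMeasure μ ∧ μ ≪ ν ∧
        Integrable h μ ∧
        Integrable (fun a => Real.log ((μ.rnDeriv ν a).toReal)) μ ∧
        r = (∫ a, h a ∂μ) - ∫ a, Real.log ((μ.rnDeriv ν a).toReal) ∂μ},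
      Real.log (∫ a, Real.exp (min (h a) c) ∂ν) ≤ r := by
  set g : A → ℝ := fun x => min (h x) c with hg
  have hgmeas : Measurable g := hmeas.min measurable_const
  have hgexp : Integrable (fun a => Real.exp (g a)) ν := by
    refine hexp.mono (hgmeas.exp.aestronglyMeasurable)
      (Filter.Eventually.of_forall fun x => ?_)
    simp only [Real.norm_eq_abs, abs_of_pos (Real.exp_pos _)]
    exact Real.exp_le_exp.mpr (min_le_left _ _)
  set Z : ℝ := ∫ a, Real.exp (g a) ∂ν with hZ
  have hZc : 0 < Z := integral_exp_pos hgexp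
  set μc : Measure A := ν.tilted g with hμc
  have hprob : IsProbabilityMeasure μc := isProbabilityMeasure_tilted hgexp
  have hac : μc ≪ ν := tilted_absolutelyContinuous ν g
  -- integrability transfer to the tilted measure
  have hdmeas : Measurable (fun x => ENNReal.ofReal (Real.exp (g x) / Z)) :=
    ENNReal.measurable_ofReal.comp (hgmeas.exp.div_const _)
  have hiff : ∀ (φ : A → ℝ), Integrable φ μc ↔
      Integrable (fun x => φ x * (Real.exp (g x) / Z)) ν := by
    intro φ
    rw [show μc = ν.withDensity (fun x => ENNReal.ofReal (Real.exp (g x) / Z)) from rfl,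
      integrable_withDensity_iff hdmeas
        (Filter.Eventually.of_forall fun x => ENNReal.ofReal_lt_top)]
    refine integrable_congr (Filter.Eventually.of_forall fun x => ?_)
    dsimp only
    rw [ENNReal.toReal_ofReal (by positivity)]
  -- Integrable h μc
  have hinth : Integrable h μc := by
    rw [hiff]
    refine Integrable.mono
      (g := fun x => (Real.exp |c| / Z) * (1 + Real.exp (h x)))
      ((((integrable_const (1:ℝ)).add hexp).const_mul (Real.exp |c| / Z)))
      ((hmeas.mul (hgmeas.exp.div_const _)).aestronglyMeasurable)
      (Filter.Eventually.of_forall fun x => ?_)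
    have hb : |h x| * Real.exp (g x) ≤ Real.exp |c| * (1 + Real.exp (h x)) := by
      rcases le_or_gt (h x) 0 with hx0 | hx0
      · have h1 : Real.exp (g x) ≤ Real.exp (h x) :=
          Real.exp_le_exp.mpr (min_le_left _ _)
        have h2 : |h x| * Real.exp (h x) ≤ 1 := by
          rw [abs_of_nonpos hx0]
          have hid : Real.exp (-(h x)) * Real.exp (h x) = 1 := by
            rw [← Real.exp_add]; simp
          nlinarith [Real.add_one_le_exp (-(h x)), Real.exp_pos (h x),
            Real.exp_pos (-(h x))]
        have h3 : |h x| * Real.exp (g x) ≤ |h x| * Real.exp (h x) :=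
          mul_le_mul_of_nonneg_left h1 (abs_nonneg _)
        have h4 : (1:ℝ) ≤ Real.exp |c| := Real.one_le_exp (abs_nonneg _)
        nlinarith [Real.exp_pos (h x), abs_nonneg (h x)]
      · have h1 : |h x| ≤ Real.exp (h x) := by
          rw [abs_of_pos hx0]
          linarith [Real.add_one_le_exp (h x)]
        have h2 : Real.exp (g x) ≤ Real.exp |c| :=
          Real.exp_le_exp.mpr ((min_le_right _ _).trans (le_abs_self c))
        nlinarith [Real.exp_pos (h x), Real.exp_pos (g x), Real.exp_pos |c|,
          abs_nonneg (h x)]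
    have key := mul_le_mul_of_nonneg_right hb (by positivity : (0:ℝ) ≤ Z⁻¹)
    simp only [Real.norm_eq_abs]
    rw [abs_mul, abs_of_pos (show (0:ℝ) < Real.exp (g x) / Z by positivity),
      abs_mul, abs_of_pos (show (0:ℝ) < Real.exp |c| / Z by positivity),
      abs_of_pos (show (0:ℝ) < 1 + Real.exp (h x) by positivity)]
    calc |h x| * (Real.exp (g x) / Z) = |h x| * Real.exp (g x) * Z⁻¹ := by ring
      _ ≤ Real.exp |c| * (1 + Real.exp (h x)) * Z⁻¹ := key
      _ = Real.exp |c| / Z * (1 + Real.exp (h x)) := by ring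
  -- Integrable g μc
  have hintg : Integrable g μc := by
    refine hinth.abs.add (integrable_const |c|) |>.mono
      (hgmeas.aestronglyMeasurable) (Filter.Eventually.of_forall fun x => ?_)
    simp only [Real.norm_eq_abs]
    rcases min_cases (h x) c with ⟨he, _⟩ | ⟨he, _⟩ <;> rw [hg] <;> dsimp only <;> rw [he]
    · have : (0:ℝ) ≤ |c| := abs_nonneg c
      calc |h x| ≤ |h x| + |c| := by linarith
        _ ≤ |(|h x| + |c|)| := le_abs_self _
    · have : (0:ℝ) ≤ |h x| := abs_nonneg _
      calc |c| ≤ |h x| + |c| := by linarith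
        _ ≤ |(|h x| + |c|)| := le_abs_self _
  -- llr of the tilted measure
  have hllr : (fun x => Real.log ((μc.rnDeriv ν x).toReal))
      =ᵐ[μc] fun x => g x - Real.log Z :=
    hac.ae_le (log_rnDeriv_tilted_left_self hgexp)
  have hintl : Integrable (fun a => Real.log ((μc.rnDeriv ν a).toReal)) μc :=
    (hintg.sub (integrable_const (Real.log Z))).congr hllr.symm
  have hval : ∫ a, Real.log ((μc.rnDeriv ν a).toReal) ∂μc
      = (∫ a, g a ∂μc) - Real.log Z := by
    rw [integral_congr_ae hllr, integral_sub hintg (integrable_const _),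
      integral_const]
    simp
  refine ⟨(∫ a, h a ∂μc) - ∫ a, Real.log ((μc.rnDeriv ν a).toReal) ∂μc,
    ⟨μc, hprob, hac, hinth, hintl, rfl⟩, ?_⟩
  rw [hval]
  have hmono : ∫ a, g a ∂μc ≤ ∫ a, h a ∂μc :=
    integral_mono hintg hinth fun x => min_le_left _ _
  have : Real.log (∫ a, Real.exp (min (h a) c) ∂ν) = Real.log Z := by rw [hZ, hg]
  rw [this]
  linarith

end DVaux

/-- Donsker–Varadhan / Catoni variational formula:
`log ∫ exp h dν = sup_{μ ≪ ν} (∫ h dμ − KL(μ,ν))`, the supremum running over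
probability measures `μ ≪ ν`.  (Terms with `∫ h dμ = ∞` or `KL(μ,ν) = ∞`
are `−∞` by the convention `∞ − ∞ = −∞`, hence do not contribute to the
supremum; we therefore range over `μ` for which both quantities are finite,
i.e. `h` and `log (dμ/dν)` are `μ`-integrable.) -/
theorem donsker_varadhan
    {A : Type*} [MeasurableSpace A] (ν : Measure A) [IsProbabilityMeasure ν]
    (h : A → ℝ) (hmeas : Measurable h)
    (hexp : Integrable (fun a => Real.exp (h a)) ν) :
    Real.log (∫ a, Real.exp (h a) ∂ν) =
      sSup {r : ℝ | ∃ μ : Measure A, IsProbabilityMeasure μ ∧ μ ≪ ν ∧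
        Integrable h μ ∧
        Integrable (fun a => Real.log ((μ.rnDeriv ν a).toReal)) μ ∧
        r = (∫ a, h a ∂μ) - ∫ a, Real.log ((μ.rnDeriv ν a).toReal) ∂μ} := by
  set S := {r : ℝ | ∃ μ : Measure A, IsProbabilityMeasure μ ∧ μ ≪ ν ∧
        Integrable h μ ∧
        Integrable (fun a => Real.log ((μ.rnDeriv ν a).toReal)) μ ∧
        r = (∫ a, h a ∂μ) - ∫ a, Real.log ((μ.rnDeriv ν a).toReal) ∂μ} with hS
  have hZpos : 0 < ∫ a, Real.exp (h a) ∂ν := integral_exp_pos hexp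
  have hub : ∀ r ∈ S, r ≤ Real.log (∫ a, Real.exp (h a) ∂ν) := by
    rintro r ⟨μ, hprob, hac, hinth, hintl, rfl⟩
    exact dv_upper ν h hexp μ hac hinth hintl
  have hbdd : BddAbove S := ⟨_, hub⟩
  have hne : S.Nonempty := by
    obtain ⟨r, hr, -⟩ := dv_witness ν h hmeas hexp 0
    exact ⟨r, hr⟩
  refine le_antisymm ?_ (csSup_le hne hub)
  -- lower bound via monotone convergence along the truncations min h n
  have hint_n : ∀ n : ℕ, Integrable (fun a => Real.exp (min (h a) (n:ℝ))) ν := by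
    intro n
    refine hexp.mono ((hmeas.min measurable_const).exp.aestronglyMeasurable)
      (Filter.Eventually.of_forall fun x => ?_)
    simp only [Real.norm_eq_abs, abs_of_pos (Real.exp_pos _)]
    exact Real.exp_le_exp.mpr (min_le_left _ _)
  have htend : Tendsto (fun n : ℕ => ∫ a, Real.exp (min (h a) (n:ℝ)) ∂ν) atTop
      (𝓝 (∫ a, Real.exp (h a) ∂ν)) := by
    refine integral_tendsto_of_tendsto_of_monotone hint_n hexp
      (Filter.Eventually.of_forall fun x => ?_)
      (Filter.Eventually.of_forall fun x => ?_)
    · intro m n hmn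
      exact Real.exp_le_exp.mpr (min_le_min le_rfl (by exact_mod_cast hmn))
    · refine Tendsto.congr' ?_ (tendsto_const_nhds (x := Real.exp (h x)))
      filter_upwards [tendsto_natCast_atTop_atTop.eventually_ge_atTop (h x)] with n hn
      rw [min_eq_left hn]
  have hlogtend : Tendsto (fun n : ℕ => Real.log (∫ a, Real.exp (min (h a) (n:ℝ)) ∂ν)) atTop
      (𝓝 (Real.log (∫ a, Real.exp (h a) ∂ν))) :=
    ((Real.continuousAt_log hZpos.ne').tendsto.comp htend)
  refine le_of_tendsto hlogtend (Filter.Eventually.of_forall fun n => ?_)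
  obtain ⟨r, hrS, hr⟩ := dv_witness ν h hmeas hexp (n : ℝ)
  exact hr.trans (le_csSup hbdd hrS)
end

section
/- Let (A,𝒜) be a measurable space, ν a probability measure, and h : A → ℝ measurable, upper-bounded on the support of ν, with ∫ exp(h) dν < ∞ and strictly positive. Then the supremum in the Donsker–Varadhan formula sup_{μ ≪ ν} { ∫ h dμ − KL(μ,ν) } is attained at the Gibbs distribution g defined by dg/dν = exp(h) / ∫ exp(h) dν, and at this g the value ∫ h dg − KL(g,ν) equals log ∫ exp(h) dν. -/
open MeasureTheory Real

lemma aux_mul_inv_le_one (a : ENNReal) : a * a⁻¹ ≤ 1 := by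
  rcases eq_or_ne a 0 with rfl | h0
  · simp
  rcases eq_or_ne a ⊤ with rfl | ht
  · simp
  · rw [ENNReal.mul_inv_cancel h0 ht]

/-- Nonnegativity of the Kullback–Leibler divergence. -/
lemma aux_kl_nonneg {A : Type*} [MeasurableSpace A] (μ ν : Measure A)
    [IsProbabilityMeasure μ] [IsProbabilityMeasure ν] (hμν : μ ≪ ν)
    (h_int : Integrable (llr μ ν) μ) : 0 ≤ ∫ a, llr μ ν a ∂μ := by
  set f := μ.rnDeriv ν with hf
  have h_pos : ∀ᵐ x ∂μ, 0 < f x := Measure.rnDeriv_pos hμν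
  have h_fin : ∀ᵐ x ∂μ, f x < ⊤ := hμν.ae_le (Measure.rnDeriv_lt_top μ ν)
  have h_lint : ∫⁻ x, (f x)⁻¹ ∂μ ≤ 1 := by
    rw [show (∫⁻ x, (f x)⁻¹ ∂μ) = ∫⁻ x, (μ.rnDeriv ν)⁻¹ x ∂μ from rfl, ← lintegral_rnDeriv_mul hμν
      ((Measure.measurable_rnDeriv μ ν).inv.aemeasurable)]
    calc ∫⁻ x, f x * (f x)⁻¹ ∂ν ≤ ∫⁻ _, 1 ∂ν :=
          lintegral_mono fun x => aux_mul_inv_le_one _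
      _ = 1 := by simp
  have h_int_inv : Integrable (fun x => ((f x)⁻¹).toReal) μ :=
    integrable_toReal_of_lintegral_ne_top
      (Measure.measurable_rnDeriv μ ν).inv.aemeasurable
      (lt_of_le_of_lt h_lint ENNReal.one_lt_top).ne
  have h_ptwise : ∀ᵐ x ∂μ, 1 - ((f x)⁻¹).toReal ≤ llr μ ν x := by
    filter_upwards [h_pos, h_fin] with x hx0 hxt
    have hy : 0 < (f x).toReal := ENNReal.toReal_pos hx0.ne' hxt.ne
    have hinv : ((f x)⁻¹).toReal = ((f x).toReal)⁻¹ := ENNReal.toReal_inv _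
    have := Real.log_le_sub_one_of_pos (inv_pos.mpr hy)
    rw [Real.log_inv] at this
    rw [hinv]
    simp only [llr]
    linarith
  have h_integral_inv : ∫ x, ((f x)⁻¹).toReal ∂μ ≤ 1 := by
    rw [show (∫ x, ((f x)⁻¹).toReal ∂μ) = ∫ x, ((μ.rnDeriv ν)⁻¹ x).toReal ∂μ from rfl, integral_toReal (Measure.measurable_rnDeriv μ ν).inv.aemeasurable
      (by filter_upwards [h_pos] with x hx; exact ENNReal.inv_lt_top.mpr hx)]
    exact ENNReal.toReal_le_of_le_ofReal one_pos.le (by simpa using h_lint)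
  calc (0 : ℝ) ≤ ∫ x, (1 - ((f x)⁻¹).toReal) ∂μ := by
        rw [integral_sub (integrable_const 1) h_int_inv]
        simp only [integral_const, probReal_univ, ENNReal.toReal_one, smul_eq_mul, one_mul]
        linarith
    _ ≤ ∫ x, llr μ ν x ∂μ :=
        integral_mono_ae ((integrable_const 1).sub h_int_inv) h_int h_ptwise

lemma aux_mul_exp_bound {x C : ℝ} (hx : x ≤ C) :
    |x * Real.exp x| ≤ max (Real.exp (-1)) (C * Real.exp C) := by
  rcases le_or_gt x 0 with hx0 | hx0
  · have h1 : -x ≤ Real.exp (-1 - x) := by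
      have := Real.add_one_le_exp (-1 - x); linarith
    have h2 : -x * Real.exp x ≤ Real.exp (-1 - x) * Real.exp x :=
      mul_le_mul_of_nonneg_right h1 (Real.exp_pos x).le
    rw [← Real.exp_add] at h2
    have : |x * Real.exp x| = -x * Real.exp x := by
      rw [abs_of_nonpos (mul_nonpos_of_nonpos_of_nonneg hx0 (Real.exp_pos x).le)]; ring
    rw [this]
    refine le_max_of_le_left ?_
    simpa using h2
  · rw [abs_of_pos (mul_pos hx0 (Real.exp_pos x))]
    exact le_max_of_le_right
      (mul_le_mul hx (Real.exp_le_exp.mpr hx) (Real.exp_pos x).le (le_trans hx0.le hx))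

/-- The supremum in the Donsker–Varadhan formula is attained at the Gibbs
distribution `dg/dν = exp h / ∫ exp h dν`, where it equals `log ∫ exp h dν`. -/
theorem donsker_varadhan_attained_gibbs
    {A : Type*} [MeasurableSpace A] (ν : Measure A) [IsProbabilityMeasure ν]
    (h : A → ℝ) (hmeas : Measurable h)
    (hexp : Integrable (fun a => Real.exp (h a)) ν)
    (hbdd : ∃ C : ℝ, ∀ᵐ a ∂ν, h a ≤ C)
    (hpos : 0 < ∫ a, Real.exp (h a) ∂ν) :
    let g : Measure A := ν.withDensity
      (fun a => ENNReal.ofReal (Real.exp (h a) / ∫ a, Real.exp (h a) ∂ν))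
    ((∫ a, h a ∂g) - ∫ a, Real.log ((g.rnDeriv ν a).toReal) ∂g
        = Real.log (∫ a, Real.exp (h a) ∂ν)) ∧
    ∀ μ : Measure A, IsProbabilityMeasure μ → μ ≪ ν →
      Integrable h μ →
      Integrable (fun a => Real.log ((μ.rnDeriv ν a).toReal)) μ →
      (∫ a, h a ∂μ) - ∫ a, Real.log ((μ.rnDeriv ν a).toReal) ∂μ
        ≤ Real.log (∫ a, Real.exp (h a) ∂ν) := by
  intro g
  set Z : ℝ := ∫ a, Real.exp (h a) ∂ν with hZ
  have hg_tilted : g = ν.tilted h := rfl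
  haveI : IsProbabilityMeasure g := by
    rw [hg_tilted]; exact isProbabilityMeasure_tilted hexp
  -- Integrability of h with respect to g
  obtain ⟨C, hC⟩ := hbdd
  have hint_g : Integrable h g := by
    rw [show g = ν.withDensity
        (fun a => ENNReal.ofReal (Real.exp (h a) / Z)) from rfl,
      integrable_withDensity_iff (by measurability)
        (Filter.Eventually.of_forall fun x => ENNReal.ofReal_lt_top)]
    have hbound : ∀ᵐ a ∂ν,
        ‖h a * (ENNReal.ofReal (Real.exp (h a) / Z)).toReal‖
          ≤ max (Real.exp (-1)) (C * Real.exp C) / Z := by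
      filter_upwards [hC] with a ha
      rw [ENNReal.toReal_ofReal (by positivity)]
      have heq : h a * (Real.exp (h a) / Z) = (h a * Real.exp (h a)) / Z :=
        (mul_div_assoc _ _ _).symm
      rw [Real.norm_eq_abs, heq, abs_div, abs_of_pos hpos]
      exact (div_le_div_iff_of_pos_right hpos).mpr (aux_mul_exp_bound ha)
    exact (integrable_const _).mono'
      ((hmeas.mul ((hmeas.exp.div_const Z).ennreal_ofReal.ennreal_toReal)).aestronglyMeasurable)
      hbound
  have hllr_g : (fun a => Real.log ((g.rnDeriv ν a).toReal)) =ᵐ[g]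
      fun a => h a - Real.log Z := by
    rw [hg_tilted]
    exact (tilted_absolutelyContinuous ν h).ae_le (log_rnDeriv_tilted_left_self hexp)
  constructor
  · rw [integral_congr_ae hllr_g, integral_sub hint_g (integrable_const _)]
    simp only [integral_const, probReal_univ, ENNReal.toReal_one, smul_eq_mul, one_mul]
    ring
  · intro μ hμ_prob hμν hint_h hint_llr
    have hμg : μ ≪ g := by
      rw [hg_tilted]; exact hμν.trans (absolutelyContinuous_tilted hexp)
    have hint_llr' : Integrable (llr μ ν) μ := hint_llr
    have hkl_int : Integrable (llr μ g) μ := by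
      rw [hg_tilted]; exact integrable_llr_tilted_right hμν hint_h hint_llr' hexp
    have hkl : 0 ≤ ∫ a, llr μ g a ∂μ := aux_kl_nonneg μ g hμg hkl_int
    rw [hg_tilted, integral_llr_tilted_right hμν hint_h hexp hint_llr'] at hkl
    have : ∫ a, Real.log ((μ.rnDeriv ν a).toReal) ∂μ = ∫ a, llr μ ν a ∂μ := rfl
    rw [this]
    linarith
end

section
/- Under the assumptions of the Alquier–Guedj theorem (p > 1, q = p/(p−1), M_{ψq,n} < ∞, ε ∈ (0,1)), with probability at least 1 − ε, for every probability measure μ ≪ π₀: ∫ R dμ ≤ ∫ r_n dμ + (M_{ψq,n}/ε)^{1/q} · ( ∫ (dμ/dπ₀)^p dπ₀ )^{1/p}. -/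
open MeasureTheory Real ENNReal

/-- Auxiliary: nonneg function with integrable `r`-th power is in `ℒ^r`. -/
lemma memLp_of_integrable_rpow_aux {α : Type*} [MeasurableSpace α] {μ : Measure α}
    {g : α → ℝ} {r : ℝ} (hr : 0 < r) (hg : AEStronglyMeasurable g μ)
    (hnn : ∀ x, 0 ≤ g x) (hint : Integrable (fun x => g x ^ r) μ) :
    MemLp g (ENNReal.ofReal r) μ := by
  have hr0 : ENNReal.ofReal r ≠ 0 := by
    simp [ENNReal.ofReal_eq_zero, not_le, hr]
  have hrt : ENNReal.ofReal r ≠ ∞ := ENNReal.ofReal_ne_top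
  have hiff := memLp_norm_rpow_iff (p := ENNReal.ofReal r) (q := ENNReal.ofReal r) hg hr0 hrt
  rw [ENNReal.div_self hr0 hrt] at hiff
  refine hiff.mp ?_
  rw [memLp_one_iff_integrable]
  have : (fun x => ‖g x‖ ^ (ENNReal.ofReal r).toReal) = fun x => g x ^ r := by
    funext x
    rw [Real.norm_of_nonneg (hnn x), ENNReal.toReal_ofReal hr.le]
  rw [this]
  exact hint

/-- One-sided Alquier–Guedj bound: with probability at least `1 − ε`, for
every posterior `μ ≪ π₀`,
`∫ R dμ ≤ ∫ r_n dμ + (M_{ψq,n}/ε)^{1/q} (∫ (dμ/dπ₀)^p dπ₀)^{1/p}`. -/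
theorem alquier_guedj_one_sided_bound
    {Ω : Type*} [MeasurableSpace Ω] (P : Measure Ω) [IsProbabilityMeasure P]
    {F : Type*} [MeasurableSpace F] (π₀ : Measure F) [IsProbabilityMeasure π₀]
    (R : F → ℝ) (hR : Measurable R)
    (rn : F → Ω → ℝ) (hrn : Measurable fun p : F × Ω => rn p.1 p.2)
    (p : ℝ) (hp : 1 < p) (q : ℝ) (hq : q = p / (p - 1))
    (ε : ℝ) (hε : ε ∈ Set.Ioo (0 : ℝ) 1)
    (Mq : ℝ) (hMq : Mq = ∫ φ, (∫ ω, |rn φ ω - R φ| ^ q ∂P) ∂π₀)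
    (hMqfin : Integrable (fun φ => ∫ ω, |rn φ ω - R φ| ^ q ∂P) π₀)
    (hMqfin' : ∀ φ, Integrable (fun ω => |rn φ ω - R φ| ^ q) P) :
    (1 : ℝ≥0∞) - ENNReal.ofReal ε ≤
      P {ω | ∀ μ : Measure F, IsProbabilityMeasure μ → μ ≪ π₀ →
        Integrable R μ → Integrable (fun φ => rn φ ω) μ →
        Integrable (fun φ => ((μ.rnDeriv π₀ φ).toReal) ^ p) π₀ →
        ∫ φ, R φ ∂μ ≤ (∫ φ, rn φ ω ∂μ) +
          (Mq / ε) ^ (1 / q) *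
            (∫ φ, ((μ.rnDeriv π₀ φ).toReal) ^ p ∂π₀) ^ (1 / p)} := by
  obtain ⟨hε0, hε1⟩ := hε
  have hp0 : 0 < p := lt_trans one_pos hp
  have hpq : p.HolderConjugate q := (Real.holderConjugate_iff_eq_conjExponent hp).mpr hq
  have hq1 : 1 < q := hpq.symm.lt
  have hq0 : 0 < q := hpq.symm.pos
  -- the deviation function
  set Δ : F → Ω → ℝ := fun φ ω => |rn φ ω - R φ| with hΔdef
  have hΔmeas : Measurable fun pr : F × Ω => Δ pr.1 pr.2 :=
    (hrn.sub (hR.comp measurable_fst)).abs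
  have hΔnn : ∀ φ ω, 0 ≤ Δ φ ω := fun φ ω => abs_nonneg _
  have hrpow : Measurable fun x : ℝ => x ^ q := (Real.continuous_rpow_const hq0.le).measurable
  have hΔq : Measurable fun pr : F × Ω => ENNReal.ofReal (Δ pr.1 pr.2 ^ q) :=
    ENNReal.measurable_ofReal.comp (hrpow.comp hΔmeas)
  -- the function `G` to which we apply Markov's inequality
  set G : Ω → ℝ≥0∞ := fun ω => ∫⁻ φ, ENNReal.ofReal (Δ φ ω ^ q) ∂π₀ with hGdef
  have hGmeas : Measurable G :=
    Measurable.lintegral_prod_right' (f := fun pr : Ω × F => ENNReal.ofReal (Δ pr.2 pr.1 ^ q))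
      (hΔq.comp measurable_swap)
  have hMq0 : 0 ≤ Mq := by
    rw [hMq]
    exact integral_nonneg fun φ =>
      integral_nonneg fun ω => Real.rpow_nonneg (hΔnn φ ω) q
  -- Tonelli: the expectation of `G` is `Mq`
  have hTon : ∫⁻ ω, G ω ∂P = ENNReal.ofReal Mq := by
    have hswap : ∫⁻ ω, ∫⁻ φ, ENNReal.ofReal (Δ φ ω ^ q) ∂π₀ ∂P
        = ∫⁻ φ, ∫⁻ ω, ENNReal.ofReal (Δ φ ω ^ q) ∂P ∂π₀ :=
      lintegral_lintegral_swap ((hΔq.comp measurable_swap).aemeasurable)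
    have hinner : ∀ φ, ∫⁻ ω, ENNReal.ofReal (Δ φ ω ^ q) ∂P
        = ENNReal.ofReal (∫ ω, Δ φ ω ^ q ∂P) := fun φ =>
      (ofReal_integral_eq_lintegral_ofReal (hMqfin' φ)
        (ae_of_all _ fun ω => Real.rpow_nonneg (hΔnn φ ω) q)).symm
    calc ∫⁻ ω, G ω ∂P = ∫⁻ φ, ∫⁻ ω, ENNReal.ofReal (Δ φ ω ^ q) ∂P ∂π₀ := hswap
      _ = ∫⁻ φ, ENNReal.ofReal (∫ ω, Δ φ ω ^ q ∂P) ∂π₀ := by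
          exact lintegral_congr fun φ => hinner φ
      _ = ENNReal.ofReal (∫ φ, (∫ ω, Δ φ ω ^ q ∂P) ∂π₀) :=
          (ofReal_integral_eq_lintegral_ofReal hMqfin
            (ae_of_all _ fun φ =>
              integral_nonneg fun ω => Real.rpow_nonneg (hΔnn φ ω) q)).symm
      _ = ENNReal.ofReal Mq := by rw [hMq]
  -- Markov's inequality
  set c : ℝ≥0∞ := ENNReal.ofReal (Mq / ε) with hcdef
  have hMarkov : P {ω | c < G ω} ≤ ENNReal.ofReal ε := by
    rcases eq_or_lt_of_le hMq0 with h0 | hpos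
    · -- `Mq = 0` : then `G = 0` a.e.
      have hz : ∫⁻ ω, G ω ∂P = 0 := by rw [hTon, ← h0, ENNReal.ofReal_zero]
      have hG0 : ∀ᵐ ω ∂P, G ω = 0 := (lintegral_eq_zero_iff hGmeas).mp hz
      have hsub : {ω | c < G ω} ⊆ {ω | ¬ G ω = 0} := by
        intro ω hω
        simp only [Set.mem_setOf_eq] at hω ⊢
        exact fun h => by simp [h] at hω
      calc P {ω | c < G ω} ≤ P {ω | ¬ G ω = 0} := measure_mono hsub
        _ = 0 := ae_iff.mp hG0
        _ ≤ ENNReal.ofReal ε := by simp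
    · have hc0 : c ≠ 0 := by
        simp only [hcdef, Ne, ENNReal.ofReal_eq_zero, not_le]
        exact div_pos hpos hε0
      have hct : c ≠ ∞ := ENNReal.ofReal_ne_top
      have key : ENNReal.ofReal Mq = ENNReal.ofReal ε * c := by
        rw [hcdef, ← ENNReal.ofReal_mul hε0.le, mul_div_cancel₀]
        exact hε0.ne'
      calc P {ω | c < G ω} ≤ P {ω | c ≤ G ω} :=
            measure_mono (fun ω (hω : c < G ω) => (le_of_lt hω : c ≤ G ω))
        _ ≤ (∫⁻ ω, G ω ∂P) / c :=
            meas_ge_le_lintegral_div hGmeas.aemeasurable hc0 hct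
        _ = ENNReal.ofReal ε * c / c := by rw [hTon, key]
        _ = ENNReal.ofReal ε := by
            rw [mul_div_assoc, ENNReal.div_self hc0 hct, mul_one]
  -- the good event is contained in the target set
  have hsubset : {ω | c < G ω}ᶜ ⊆ {ω | ∀ μ : Measure F, IsProbabilityMeasure μ → μ ≪ π₀ →
      Integrable R μ → Integrable (fun φ => rn φ ω) μ →
      Integrable (fun φ => ((μ.rnDeriv π₀ φ).toReal) ^ p) π₀ →
      ∫ φ, R φ ∂μ ≤ (∫ φ, rn φ ω ∂μ) +
        (Mq / ε) ^ (1 / q) *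
          (∫ φ, ((μ.rnDeriv π₀ φ).toReal) ^ p ∂π₀) ^ (1 / p)} := by
    intro ω hω
    have hωle : G ω ≤ c := not_lt.mp hω
    intro μ hμprob hac hIntR hIntrn hIntfp
    set f : F → ℝ := fun φ => (μ.rnDeriv π₀ φ).toReal with hfdef
    have hfmeas : Measurable f := (Measure.measurable_rnDeriv μ π₀).ennreal_toReal
    have hfnn : ∀ φ, 0 ≤ f φ := fun φ => ENNReal.toReal_nonneg
    have hDmeas : Measurable fun φ => Δ φ ω :=
      hΔmeas.comp (measurable_id.prodMk measurable_const)
    -- integrability of `Δ(·,ω)^q` w.r.t. `π₀`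
    have hDq_int : Integrable (fun φ => Δ φ ω ^ q) π₀ := by
      refine ⟨(hrpow.comp hDmeas).aestronglyMeasurable, ?_⟩
      rw [hasFiniteIntegral_iff_ofReal
        (ae_of_all _ fun φ => Real.rpow_nonneg (hΔnn φ ω) q)]
      exact lt_of_le_of_lt hωle ENNReal.ofReal_lt_top
    have hDq_eq : ENNReal.ofReal (∫ φ, Δ φ ω ^ q ∂π₀) = G ω :=
      ofReal_integral_eq_lintegral_ofReal hDq_int
        (ae_of_all _ fun φ => Real.rpow_nonneg (hΔnn φ ω) q)
    have hDq_bound : ∫ φ, Δ φ ω ^ q ∂π₀ ≤ Mq / ε := by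
      refine (ENNReal.ofReal_le_ofReal_iff (div_nonneg hMq0 hε0.le)).mp ?_
      rw [hDq_eq]; exact hωle
    -- `Memℒp` statements for Hölder
    have hDmem : MemLp (fun φ => Δ φ ω) (ENNReal.ofReal q) π₀ :=
      memLp_of_integrable_rpow_aux hq0 hDmeas.aestronglyMeasurable
        (fun φ => hΔnn φ ω) hDq_int
    have hfmem : MemLp f (ENNReal.ofReal p) π₀ :=
      memLp_of_integrable_rpow_aux hp0 hfmeas.aestronglyMeasurable hfnn hIntfp
    -- Hölder's inequality
    have hHold : ∫ φ, f φ * Δ φ ω ∂π₀ ≤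
        (∫ φ, f φ ^ p ∂π₀) ^ (1 / p) * (∫ φ, Δ φ ω ^ q ∂π₀) ^ (1 / q) :=
      integral_mul_le_Lp_mul_Lq_of_nonneg hpq (ae_of_all _ hfnn)
        (ae_of_all _ fun φ => hΔnn φ ω) hfmem hDmem
    -- change of measure
    have hchg : ∫ φ, Δ φ ω ∂μ = ∫ φ, f φ * Δ φ ω ∂π₀ := by
      rw [← MeasureTheory.integral_rnDeriv_smul hac (f := fun φ => Δ φ ω)]
      simp [hfdef, smul_eq_mul]
    -- comparison of the risks
    have h1 : ∫ φ, R φ ∂μ - ∫ φ, rn φ ω ∂μ ≤ ∫ φ, Δ φ ω ∂μ := by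
      rw [← integral_sub hIntR hIntrn]
      refine integral_mono (hIntR.sub hIntrn) (hIntrn.sub hIntR).abs fun φ => ?_
      simp only [hΔdef]
      have : R φ - rn φ ω = -(rn φ ω - R φ) := by ring
      rw [this]
      exact neg_le_abs _
    have hfpnn : 0 ≤ (∫ φ, f φ ^ p ∂π₀) ^ (1 / p) :=
      Real.rpow_nonneg (integral_nonneg fun φ => Real.rpow_nonneg (hfnn φ) p) _
    have h2 : (∫ φ, f φ ^ p ∂π₀) ^ (1 / p) * (∫ φ, Δ φ ω ^ q ∂π₀) ^ (1 / q)
        ≤ (Mq / ε) ^ (1 / q) * (∫ φ, f φ ^ p ∂π₀) ^ (1 / p) := by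
      rw [mul_comm ((Mq / ε) ^ (1 / q))]
      refine mul_le_mul_of_nonneg_left ?_ hfpnn
      exact Real.rpow_le_rpow
        (integral_nonneg fun φ => Real.rpow_nonneg (hΔnn φ ω) q)
        hDq_bound (by positivity)
    calc ∫ φ, R φ ∂μ ≤ ∫ φ, rn φ ω ∂μ + ∫ φ, Δ φ ω ∂μ := by linarith
      _ = ∫ φ, rn φ ω ∂μ + ∫ φ, f φ * Δ φ ω ∂π₀ := by rw [hchg]
      _ ≤ ∫ φ, rn φ ω ∂μ +
          (∫ φ, f φ ^ p ∂π₀) ^ (1 / p) * (∫ φ, Δ φ ω ^ q ∂π₀) ^ (1 / q) := by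
          linarith
      _ ≤ ∫ φ, rn φ ω ∂μ +
          (Mq / ε) ^ (1 / q) * (∫ φ, f φ ^ p ∂π₀) ^ (1 / p) := by linarith
  -- conclude
  have hEm : MeasurableSet {ω | c < G ω} := measurableSet_lt measurable_const hGmeas
  calc (1 : ℝ≥0∞) - ENNReal.ofReal ε ≤ 1 - P {ω | c < G ω} :=
        tsub_le_tsub_left hMarkov 1
    _ = P ({ω | c < G ω}ᶜ) := (prob_compl_eq_one_sub hEm).symm
    _ ≤ _ := measure_mono hsubset
end
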